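/- arXiv:2511.10425 — 5 statements merged into one kernel-verified Lean document; each statement's English description precedes it below -/
import Mathlib

section
/- Let S ⊆ ℝⁿ be a nonempty convex set, L > 0, ν ∈ (0,1], and h a convex differentiable function whose gradient is (ν,L)-Hölder continuous on S. For x, y ∈ S, define d_{x,y} := ‖∇h(y) − ∇h(x)‖^{(1−ν)/ν}(∇h(y) − ∇h(x)). If y − d_{x,y}/L^{1/ν} ∈ S, then h(y) ≥ h(x) + ⟨∇h(x), y − x⟩ + (ν/((1+ν)L^{1/ν}))‖∇h(y) − ∇h(x)‖^{(1+ν)/ν}. -/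
open Set Metric Filter
open scoped InnerProductSpace Topology

lemma line_hasDerivAt {n : ℕ} (h : EuclideanSpace ℝ (Fin n) → ℝ)
    (gw a v : EuclideanSpace ℝ (Fin n)) (s : ℝ)
    (hg : HasGradientAt h gw (a + s • v)) :
    HasDerivAt (fun t : ℝ => h (a + t • v)) ⟪gw, v⟫_ℝ s := by
  have hc : HasDerivAt (fun t : ℝ => a + t • v) v s := by
    simpa using ((hasDerivAt_id s).smul_const v).const_add a
  have hf := hasGradientAt_iff_hasFDerivAt.mp hg
  have := hf.comp_hasDerivAt s hc
  exact this

/-- First-order condition for convexity. -/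
lemma conv_lb {n : ℕ} {S : Set (EuclideanSpace ℝ (Fin n))}
    {h : EuclideanSpace ℝ (Fin n) → ℝ} {gx : EuclideanSpace ℝ (Fin n)}
    (hconv : ConvexOn ℝ S h) {x z : EuclideanSpace ℝ (Fin n)}
    (hx : x ∈ S) (hz : z ∈ S) (hg : HasGradientAt h gx x) :
    h x + ⟪gx, z - x⟫_ℝ ≤ h z := by
  set φ : ℝ → ℝ := fun t => h (x + t • (z - x)) with hφ
  have hd : HasDerivAt φ ⟪gx, z - x⟫_ℝ 0 := by
    apply line_hasDerivAt
    simpa using hg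
  have htends : Tendsto (slope φ 0) (𝓝[>] 0) (𝓝 ⟪gx, z - x⟫_ℝ) :=
    (hasDerivAt_iff_tendsto_slope.mp hd).mono_left
      (nhdsWithin_mono _ fun t ht => ne_of_gt ht)
  have hle : ⟪gx, z - x⟫_ℝ ≤ h z - h x := by
    refine le_of_tendsto htends ?_
    filter_upwards [Ioo_mem_nhdsGT_of_mem (Set.left_mem_Ico.mpr one_pos)] with t ht
    have h1 : φ t ≤ (1 - t) * h x + t * h z := by
      have : x + t • (z - x) = (1 - t) • x + t • z := by
        simp [smul_sub, sub_smul]; abel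
      rw [hφ]; simp only; rw [this]
      exact hconv.2 hx hz (by linarith [ht.2]) (le_of_lt ht.1) (by ring)
    have hφ0 : φ 0 = h x := by simp [hφ]
    have : slope φ 0 t = (φ t - φ 0) / t := by simp [slope_def_field, div_eq_iff, sub_zero]
    rw [this, hφ0, div_le_iff₀ ht.1]
    nlinarith [ht.1]
  linarith

/-- Hölder-gradient descent lemma. -/
lemma descent {n : ℕ} {S : Set (EuclideanSpace ℝ (Fin n))} (hSconv : Convex ℝ S)
    {L ν : ℝ} (hL : 0 < L) (hν : ν ∈ Set.Ioc (0 : ℝ) 1)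
    {h : EuclideanSpace ℝ (Fin n) → ℝ} {g : EuclideanSpace ℝ (Fin n) → EuclideanSpace ℝ (Fin n)}
    (hgrad : ∀ x ∈ S, HasGradientAt h (g x) x)
    (hhold : ∀ x ∈ S, ∀ y ∈ S, ‖g x - g y‖ ≤ L * ‖x - y‖ ^ ν)
    {w z : EuclideanSpace ℝ (Fin n)} (hw : w ∈ S) (hz : z ∈ S) :
    h z ≤ h w + ⟪g w, z - w⟫_ℝ + L / (1 + ν) * ‖z - w‖ ^ (1 + ν) := by
  obtain ⟨hν0, hν1⟩ := hν
  set v := z - w with hv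
  have hseg : ∀ t : ℝ, t ∈ Icc (0:ℝ) 1 → w + t • v ∈ S := by
    intro t ht
    have : w + t • v = (1 - t) • w + t • z := by
      simp [hv, smul_sub, sub_smul]; abel
    rw [this]
    exact hSconv hw hz (by linarith [ht.2]) ht.1 (by ring)
  set ψ : ℝ → ℝ := fun t => h (w + t • v) - t * ⟪g w, v⟫_ℝ - L / (1 + ν) * (t ^ (1 + ν) * ‖v‖ ^ (1 + ν)) with hψ
  have hψder : ∀ t ∈ Icc (0:ℝ) 1, HasDerivAt ψ
      (⟪g (w + t • v), v⟫_ℝ - ⟪g w, v⟫_ℝ - L / (1 + ν) * ((1 + ν) * t ^ ν * ‖v‖ ^ (1 + ν))) t := by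
    intro t ht
    have h1 : HasDerivAt (fun t : ℝ => h (w + t • v)) ⟪g (w + t • v), v⟫_ℝ t :=
      line_hasDerivAt h _ w v t (hgrad _ (hseg t ht))
    have h2 : HasDerivAt (fun t : ℝ => t * ⟪g w, v⟫_ℝ) ⟪g w, v⟫_ℝ t := by
      simpa using (hasDerivAt_id t).mul_const ⟪g w, v⟫_ℝ
    have h3 : HasDerivAt (fun t : ℝ => t ^ (1 + ν)) ((1 + ν) * t ^ ν) t := by
      have := Real.hasDerivAt_rpow_const (x := t) (p := 1 + ν) (Or.inr (by linarith))
      simpa using this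
    have h4 : HasDerivAt (fun t : ℝ => L / (1 + ν) * (t ^ (1 + ν) * ‖v‖ ^ (1 + ν)))
        (L / (1 + ν) * ((1 + ν) * t ^ ν * ‖v‖ ^ (1 + ν))) t := by
      have := (h3.mul_const (‖v‖ ^ (1 + ν))).const_mul (L / (1 + ν))
      simpa [mul_assoc] using this
    exact (h1.sub h2).sub h4
  have hanti : AntitoneOn ψ (Icc (0:ℝ) 1) := by
    apply antitoneOn_of_hasDerivWithinAt_nonpos (convex_Icc 0 1)
    · exact fun t ht => ((hψder t ht).continuousAt).continuousWithinAt
    · intro t ht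
      rw [interior_Icc] at ht
      exact ((hψder t (Ioo_subset_Icc_self ht)).hasDerivWithinAt)
    · intro t ht
      rw [interior_Icc] at ht
      have hhb : ‖g (w + t • v) - g w‖ ≤ L * t ^ ν * ‖v‖ ^ ν := by
        have := hhold _ (hseg t (Ioo_subset_Icc_self ht)) w hw
        have hn : ‖w + t • v - w‖ = t * ‖v‖ := by
          simp [norm_smul, abs_of_pos ht.1]
        rw [hn] at this
        calc ‖g (w + t • v) - g w‖ ≤ L * (t * ‖v‖) ^ ν := this
          _ = L * t ^ ν * ‖v‖ ^ ν := by
              rw [Real.mul_rpow (le_of_lt ht.1) (norm_nonneg _)]; ring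
      have hip : ⟪g (w + t • v), v⟫_ℝ - ⟪g w, v⟫_ℝ ≤ L * t ^ ν * ‖v‖ ^ ν * ‖v‖ := by
        have h5 : ⟪g (w + t • v) - g w, v⟫_ℝ ≤ ‖g (w + t • v) - g w‖ * ‖v‖ :=
          real_inner_le_norm _ _
        have := mul_le_mul_of_nonneg_right hhb (norm_nonneg v)
        rw [inner_sub_left] at h5
        linarith
      have hnv : ‖v‖ ^ ν * ‖v‖ = ‖v‖ ^ (1 + ν) := by
        rw [add_comm, Real.rpow_add_one' (norm_nonneg v) (by linarith)]
      have hL' : L / (1 + ν) * ((1 + ν) * t ^ ν * ‖v‖ ^ (1 + ν)) = L * t ^ ν * ‖v‖ ^ (1 + ν) := by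
        field_simp
      rw [hL']
      calc ⟪g (w + t • v), v⟫_ℝ - ⟪g w, v⟫_ℝ - L * t ^ ν * ‖v‖ ^ (1 + ν)
          ≤ L * t ^ ν * ‖v‖ ^ ν * ‖v‖ - L * t ^ ν * ‖v‖ ^ (1 + ν) := by linarith
        _ = 0 := by rw [mul_assoc (L * t ^ ν), hnv]; ring
  have key := hanti (Set.left_mem_Icc.mpr zero_le_one) (Set.right_mem_Icc.mpr zero_le_one) zero_le_one
  have hψ0 : ψ 0 = h w := by
    simp [hψ, Real.zero_rpow (by positivity : (1:ℝ) + ν ≠ 0)]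
  have hψ1 : ψ 1 = h z - ⟪g w, v⟫_ℝ - L / (1 + ν) * ‖v‖ ^ (1 + ν) := by
    simp [hψ, hv, Real.one_rpow]
  rw [hψ0, hψ1] at key
  linarith

theorem stmt2 {n : ℕ} (S : Set (EuclideanSpace ℝ (Fin n))) (hSne : S.Nonempty)
    (hSconv : Convex ℝ S) (L ν : ℝ) (hL : 0 < L) (hν : ν ∈ Set.Ioc (0 : ℝ) 1)
    (h : EuclideanSpace ℝ (Fin n) → ℝ)
    (g : EuclideanSpace ℝ (Fin n) → EuclideanSpace ℝ (Fin n))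
    (hgrad : ∀ x ∈ S, HasGradientAt h (g x) x)
    (hconv : ConvexOn ℝ S h)
    (hhold : ∀ x ∈ S, ∀ y ∈ S, ‖g x - g y‖ ≤ L * ‖x - y‖ ^ ν)
    (x y : EuclideanSpace ℝ (Fin n)) (hx : x ∈ S) (hy : y ∈ S)
    (hmem : y - (L ^ (1 / ν))⁻¹ • (‖g y - g x‖ ^ ((1 - ν) / ν) • (g y - g x)) ∈ S) :
    h y ≥ h x + ⟪g x, y - x⟫_ℝ +
      ν / ((1 + ν) * L ^ (1 / ν)) * ‖g y - g x‖ ^ ((1 + ν) / ν) := by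
  obtain ⟨hν0, hν1⟩ := hν
  set u := g y - g x with hu
  by_cases hu0 : u = 0
  · have h0 : ‖u‖ ^ ((1 + ν) / ν) = 0 := by
      rw [hu0, norm_zero, Real.zero_rpow (by positivity)]
    have hlb := conv_lb hconv hx hy (hgrad x hx)
    rw [h0, mul_zero, add_zero]
    exact hlb
  · set A := L ^ (1 / ν) with hA
    have hA0 : 0 < A := Real.rpow_pos_of_pos hL _
    set r := ‖u‖ with hr
    have hr0 : 0 < r := norm_pos_iff.mpr hu0
    set z := y - A⁻¹ • (r ^ ((1 - ν) / ν) • u) with hzdef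
    have hzS : z ∈ S := hmem
    have hlb := conv_lb hconv hx hzS (hgrad x hx)
    have hub := descent hSconv hL ⟨hν0, hν1⟩ hgrad hhold hy hzS
    set c := A⁻¹ * r ^ ((1 - ν) / ν) with hc
    have hc0 : 0 < c := by positivity
    have hzy : z - y = -(c • u) := by
      rw [hzdef, hc]
      rw [smul_smul]
      abel
    have hnzy : ‖z - y‖ = c * r := by
      rw [hzy, norm_neg, norm_smul, Real.norm_eq_abs, abs_of_pos hc0, hr]
    -- inner product computations
    have hinner : ⟪g x, z - x⟫_ℝ - ⟪g y, z - y⟫_ℝ = ⟪g x, y - x⟫_ℝ + c * (r ^ 2) := by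
      have e1 : z - x = (y - x) + (z - y) := by abel
      have e3 : ⟪g x, z - y⟫_ℝ - ⟪g y, z - y⟫_ℝ = c * r ^ 2 := by
        rw [← inner_sub_left, hzy, inner_neg_right, inner_smul_right,
          show g x - g y = -u by rw [hu]; abel, inner_neg_left,
          real_inner_self_eq_norm_sq, ← hr]
        ring
      rw [e1, inner_add_right]
      linarith
    -- rpow arithmetic
    have hP : ∀ a b : ℝ, 0 < a → a ^ b * a = a ^ (b + 1) := fun a b ha => by
      rw [Real.rpow_add_one (ne_of_gt ha)]
    have hcr2 : c * r ^ 2 = A⁻¹ * r ^ ((1 + ν) / ν) := by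
      rw [hc, mul_assoc, sq, ← mul_assoc (r ^ ((1 - ν) / ν)), hP r _ hr0, hP r _ hr0]
      congr 2
      field_simp
      ring
    have hcr : c * r = A⁻¹ * r ^ (1 / ν) := by
      rw [hc, mul_assoc, hP r _ hr0]
      congr 1
      field_simp
      congr 1
      ring
    have hA1 : A ^ (1 + ν) = L ^ (1 / ν) * L := by
      rw [hA, ← Real.rpow_mul hL.le,
        show (1 / ν) * (1 + ν) = 1 / ν + 1 by field_simp,
        Real.rpow_add_one (ne_of_gt hL)]
    have hpow : L / (1 + ν) * (c * r) ^ (1 + ν) = A⁻¹ / (1 + ν) * r ^ ((1 + ν) / ν) := by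
      rw [hcr, Real.mul_rpow (by positivity) (by positivity),
        Real.inv_rpow hA0.le, hA1]
      rw [← Real.rpow_mul hr0.le]
      rw [show (1 / ν) * (1 + ν) = (1 + ν) / ν by field_simp]
      rw [hA, mul_inv]
      field_simp
    have final : c * r ^ 2 - L / (1 + ν) * (c * r) ^ (1 + ν)
        = ν / ((1 + ν) * A) * r ^ ((1 + ν) / ν) := by
      rw [hcr2, hpow]
      field_simp
      ring
    rw [hnzy] at hub
    linarith [hlb, hub, hinner, final]
end

section
/- Let h : ℝⁿ → ℝ be continuously differentiable and locally strongly convex (for every x there exist δₓ > 0 and μₓ > 0 such that h is μₓ-strongly convex on B(x; δₓ)), and let S ⊆ ℝⁿ be a nonempty convex compact set. Then there exists μ > 0 such that h is μ-strongly convex on S. -/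
open Set Metric Topology Filter
open scoped InnerProductSpace

/-- `h` is `μ`-strongly convex on `C` (first-order characterization via the gradient `g`). -/
def StrongConvexOnSet {n : ℕ} (h : EuclideanSpace ℝ (Fin n) → ℝ)
    (g : EuclideanSpace ℝ (Fin n) → EuclideanSpace ℝ (Fin n))
    (μ : ℝ) (C : Set (EuclideanSpace ℝ (Fin n))) : Prop :=
  ∀ x ∈ C, ∀ y ∈ C, h y ≥ h x + ⟪g x, y - x⟫_ℝ + μ / 2 * ‖y - x‖ ^ 2

/-- A continuous real function on `[0,1]` that is locally nondecreasing is at least its value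
at `0`. -/
lemma key_local_to_global {ψ : ℝ → ℝ} (hψ : Continuous ψ)
    (hloc : ∀ t ∈ Icc (0:ℝ) 1, ∃ ε > (0:ℝ), ∀ s ∈ Icc (0:ℝ) 1, ∀ u ∈ Icc (0:ℝ) 1,
      |s - t| < ε → |u - t| < ε → s ≤ u → ψ s ≤ ψ u) :
    ∀ t ∈ Icc (0:ℝ) 1, ψ 0 ≤ ψ t := by
  set T : Set ℝ := {t | t ∈ Icc (0:ℝ) 1 ∧ ∀ s ∈ Icc 0 t, ψ 0 ≤ ψ s} with hT
  have h0T : (0:ℝ) ∈ T := by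
    refine ⟨⟨le_refl _, zero_le_one⟩, fun s hs => ?_⟩
    have : s = 0 := le_antisymm hs.2 hs.1
    simp [this]
  have hTne : T.Nonempty := ⟨0, h0T⟩
  have hTbdd : BddAbove T := ⟨1, fun t ht => ht.1.2⟩
  set c := sSup T with hc
  have hc0 : 0 ≤ c := le_csSup hTbdd h0T
  have hc1 : c ≤ 1 := csSup_le hTne (fun t ht => ht.1.2)
  have hA : ∀ s ∈ Ico (0:ℝ) c, ψ 0 ≤ ψ s := by
    intro s hs
    obtain ⟨t, htT, hst⟩ := exists_lt_of_lt_csSup hTne hs.2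
    exact htT.2 s ⟨hs.1, le_of_lt hst⟩
  have hBc : ψ 0 ≤ ψ c := by
    rcases eq_or_lt_of_le hc0 with h | h
    · simp [← h]
    · have hcl : c ∈ closure (Ico (0:ℝ) c) := by
        rw [closure_Ico h.ne]
        exact ⟨hc0, le_refl _⟩
      haveI hne : (𝓝[Ico (0:ℝ) c] c).NeBot := mem_closure_iff_nhdsWithin_neBot.mp hcl
      have hct := hψ.continuousWithinAt (s := Ico (0:ℝ) c) (x := c)
      exact ge_of_tendsto hct (Filter.eventually_of_mem self_mem_nhdsWithin hA)
  have hcT : c ∈ T := by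
    refine ⟨⟨hc0, hc1⟩, fun s hs => ?_⟩
    rcases lt_or_eq_of_le hs.2 with h | h
    · exact hA s ⟨hs.1, h⟩
    · rw [h]; exact hBc
  have hc1' : c = 1 := by
    by_contra hne
    have hclt : c < 1 := lt_of_le_of_ne hc1 hne
    obtain ⟨ε, hε, hmono⟩ := hloc c ⟨hc0, hc1⟩
    set c' := min 1 (c + ε / 2) with hc'
    have hcc' : c < c' := lt_min hclt (by linarith)
    have hc'T : c' ∈ T := by
      have hc'1 : c' ≤ 1 := min_le_left _ _
      have hc'0 : 0 ≤ c' := le_trans hc0 (le_of_lt hcc')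
      refine ⟨⟨hc'0, hc'1⟩, fun s hs => ?_⟩
      rcases le_or_gt s c with h | h
      · exact hcT.2 s ⟨hs.1, h⟩
      · have hsc : s - c < ε := by
          have : s ≤ c + ε / 2 := le_trans hs.2 (min_le_right _ _)
          linarith
        have h1 : ψ c ≤ ψ s := by
          refine hmono c ⟨hc0, hc1⟩ s ⟨hs.1, le_trans hs.2 hc'1⟩ (by simp [hε]) ?_ (le_of_lt h)
          rw [abs_lt]; constructor <;> linarith
        exact le_trans hBc h1
    exact absurd (le_csSup hTbdd hc'T) (not_le.mpr hcc')
  intro t ht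
  exact hcT.2 t ⟨ht.1, hc1' ▸ ht.2⟩

set_option maxHeartbeats 1000000 in
theorem stmt4 {n : ℕ} (h : EuclideanSpace ℝ (Fin n) → ℝ)
    (g : EuclideanSpace ℝ (Fin n) → EuclideanSpace ℝ (Fin n))
    (hsmooth : ContDiff ℝ 1 h)
    (hgrad : ∀ x, HasGradientAt h (g x) x)
    (hloc : ∀ x : EuclideanSpace ℝ (Fin n), ∃ δ > (0 : ℝ), ∃ μ > (0 : ℝ),
      StrongConvexOnSet h g μ (ball x δ))
    (S : Set (EuclideanSpace ℝ (Fin n))) (hSne : S.Nonempty)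
    (hSconv : Convex ℝ S) (hScpt : IsCompact S) :
    ∃ μ > (0 : ℝ), StrongConvexOnSet h g μ S := by
  classical
  -- choice of local data
  choose δ hδ μf hμf hSC using hloc
  -- finite subcover
  obtain ⟨t, hcover⟩ := hScpt.elim_nhds_subcover (fun x => ball x (δ x))
    (fun x _ => ball_mem_nhds x (hδ x))
  have htne : t.Nonempty := by
    rcases hSne with ⟨p, hp⟩
    rcases Set.mem_iUnion₂.mp (hcover.2 hp) with ⟨x, hx, _⟩
    exact ⟨x, hx⟩
  set μ := t.inf' htne μf with hμdef
  have hμpos : 0 < μ := by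
    rw [hμdef, Finset.lt_inf'_iff]
    exact fun x _ => hμf x
  refine ⟨μ, hμpos, ?_⟩
  -- continuity of g
  have hgc : Continuous g := by
    have h1 : Continuous (fderiv ℝ h) := hsmooth.continuous_fderiv one_ne_zero
    have h2 : g = fun x => (InnerProductSpace.toDual ℝ _).symm (fderiv ℝ h x) := by
      funext x
      rw [(hgrad x).hasFDerivAt.fderiv, LinearIsometryEquiv.symm_apply_apply]
    rw [h2]
    exact (InnerProductSpace.toDual ℝ _).symm.continuous.comp h1
  -- local strong convexity with the uniform μ around every point of S
  have hlocS : ∀ p ∈ S, ∃ ε > (0:ℝ), StrongConvexOnSet h g μ (ball p ε) := by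
    intro p hp
    rcases Set.mem_iUnion₂.mp (hcover.2 hp) with ⟨x, hxt, hpx⟩
    refine ⟨δ x - dist p x, sub_pos.mpr (mem_ball.mp hpx), ?_⟩
    have hsub : ball p (δ x - dist p x) ⊆ ball x (δ x) := ball_subset_ball' (by linarith)
    intro a ha b hb
    have := hSC x a (hsub ha) b (hsub hb)
    have hμle : μ ≤ μf x := Finset.inf'_le _ hxt
    nlinarith [sq_nonneg ‖b - a‖]
  -- main argument
  intro a ha b hb
  set v := b - a with hv
  set L : ℝ → EuclideanSpace ℝ (Fin n) := fun s => a + s • v with hL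
  have hLmem : ∀ s ∈ Icc (0:ℝ) 1, L s ∈ S := fun s hs =>
    hSconv.add_smul_sub_mem ha hb hs
  have hL0 : L 0 = a := by simp [hL]
  have hL1 : L 1 = b := by simp [hL, hv]
  set ψ : ℝ → ℝ := fun s => ⟪g (L s), v⟫_ℝ - s * (μ * ‖v‖ ^ 2) with hψdef
  have hψc : Continuous ψ := by
    have hLc : Continuous L := by fun_prop
    exact ((hgc.comp hLc).inner continuous_const).sub (by fun_prop)
  -- local monotonicity of ψ
  have hψloc : ∀ s ∈ Icc (0:ℝ) 1, ∃ ε > (0:ℝ), ∀ s' ∈ Icc (0:ℝ) 1, ∀ u ∈ Icc (0:ℝ) 1,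
      |s' - s| < ε → |u - s| < ε → s' ≤ u → ψ s' ≤ ψ u := by
    intro s hs
    obtain ⟨ε', hε', hsc⟩ := hlocS (L s) (hLmem s hs)
    refine ⟨ε' / (2 * (‖v‖ + 1)), by positivity, ?_⟩
    intro s' hs' u hu hs'ε huε hle
    have hdist : ∀ r : ℝ, |r - s| < ε' / (2 * (‖v‖ + 1)) → L r ∈ ball (L s) ε' := by
      intro r hr
      have : ‖L r - L s‖ = |r - s| * ‖v‖ := by
        have : L r - L s = (r - s) • v := by
          simp only [hL, sub_smul]
          abel
        rw [this, norm_smul, Real.norm_eq_abs]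
      rw [mem_ball, dist_eq_norm, this]
      have h1 : (0:ℝ) ≤ ‖v‖ := norm_nonneg v
      have h2 : |r - s| ≥ 0 := abs_nonneg _
      have h3 : |r - s| * (2 * (‖v‖ + 1)) < ε' := by
        rw [lt_div_iff₀ (by positivity)] at hr
        exact hr
      have h4 : |r - s| * ‖v‖ ≤ |r - s| * (2 * (‖v‖ + 1)) :=
        mul_le_mul_of_nonneg_left (by linarith) h2
      linarith
    have hm1 := hsc (L s') (hdist s' hs'ε) (L u) (hdist u huε)
    have hm2 := hsc (L u) (hdist u huε) (L s') (hdist s' hs'ε)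
    have hd1 : L u - L s' = (u - s') • v := by
      simp only [hL, sub_smul]
      abel
    have hd2 : L s' - L u = -((u - s') • v) := by rw [← hd1]; abel
    have hin1 : ⟪g (L s'), L u - L s'⟫_ℝ = (u - s') * ⟪g (L s'), v⟫_ℝ := by
      rw [hd1, real_inner_smul_right]
    have hin2 : ⟪g (L u), L s' - L u⟫_ℝ = -((u - s') * ⟪g (L u), v⟫_ℝ) := by
      rw [hd2, inner_neg_right, real_inner_smul_right]
    have hn1 : ‖L u - L s'‖ ^ 2 = (u - s') ^ 2 * ‖v‖ ^ 2 := by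
      rw [hd1, norm_smul, Real.norm_eq_abs, mul_pow, sq_abs]
    have hn2 : ‖L s' - L u‖ ^ 2 = (u - s') ^ 2 * ‖v‖ ^ 2 := by
      rw [norm_sub_rev, hn1]
    rw [hin1, hn1] at hm1
    rw [hin2, hn2] at hm2
    -- adding: (u - s') * (⟪g (L u), v⟫ - ⟪g (L s'), v⟫) ≥ μ * (u-s')^2 * ‖v‖^2
    rcases eq_or_lt_of_le hle with heq | hlt
    · rw [heq]
    · have hus : 0 < u - s' := by linarith
      have key2 : (u - s') * ((u - s') * (μ * ‖v‖ ^ 2)) ≤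
          (u - s') * (⟪g (L u), v⟫_ℝ - ⟪g (L s'), v⟫_ℝ) := by nlinarith
      have key3 := le_of_mul_le_mul_left key2 hus
      simp only [hψdef]
      nlinarith [key3]
  have hψge := key_local_to_global hψc hψloc
  have hψ0 : ψ 0 = ⟪g a, v⟫_ℝ := by simp [hψdef, hL0]
  -- the auxiliary function Φ and its derivative
  set Φ : ℝ → ℝ := fun s => h (L s) - s * ⟪g a, v⟫_ℝ - s ^ 2 * (μ * ‖v‖ ^ 2 / 2) with hΦdef
  have hΦderiv : ∀ s : ℝ, HasDerivAt Φ
      (⟪g (L s), v⟫_ℝ - ⟪g a, v⟫_ℝ - 2 * s * (μ * ‖v‖ ^ 2 / 2)) s := by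
    intro s
    have hLd : HasDerivAt L v s := by
      have h1 : HasDerivAt (fun r : ℝ => r • v) ((1:ℝ) • v) s :=
        (hasDerivAt_id s).smul_const v
      simpa [hL, one_smul] using h1.const_add a
    have hhd : HasDerivAt (fun r => h (L r)) (⟪g (L s), v⟫_ℝ) s := by
      have := (hgrad (L s)).hasFDerivAt.comp_hasDerivAt s hLd
      simp only [InnerProductSpace.toDual_apply_apply] at this; exact this
    have h2 : HasDerivAt (fun r : ℝ => r * ⟪g a, v⟫_ℝ) (⟪g a, v⟫_ℝ) s := by
      simpa using (hasDerivAt_id s).mul_const (⟪g a, v⟫_ℝ)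
    have h3 : HasDerivAt (fun r : ℝ => r ^ 2 * (μ * ‖v‖ ^ 2 / 2))
        (2 * s * (μ * ‖v‖ ^ 2 / 2)) s := by
      simpa [pow_one] using (hasDerivAt_pow 2 s).mul_const (μ * ‖v‖ ^ 2 / 2)
    exact (hhd.sub h2).sub h3
  have hΦmono : MonotoneOn Φ (Icc (0:ℝ) 1) := by
    refine monotoneOn_of_deriv_nonneg (convex_Icc 0 1)
      (Continuous.continuousOn ?_) (fun s hs => (hΦderiv s).differentiableAt.differentiableWithinAt)
      (fun s hs => ?_)
    · have : Differentiable ℝ Φ := fun s => (hΦderiv s).differentiableAt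
      exact this.continuous
    · rw [interior_Icc] at hs
      rw [(hΦderiv s).deriv]
      have := hψge s ⟨le_of_lt hs.1, le_of_lt hs.2⟩
      rw [hψ0] at this
      simp only [hψdef] at this
      linarith
  have hfinal := hΦmono ⟨le_refl 0, zero_le_one⟩ ⟨zero_le_one, le_refl 1⟩ zero_le_one
  simp only [hΦdef, hL0, hL1] at hfinal
  have : h b ≥ h a + ⟪g a, v⟫_ℝ + μ / 2 * ‖v‖ ^ 2 := by nlinarith
  simpa [hv] using this
end

section
/- Let h : ℝⁿ → ℝ be continuously differentiable and convex, satisfying the KL inequality locally at every point (as in the previous statement), and let S ⊆ ℝⁿ be compact. Then there exist uniform constants ϑ_S ∈ (0,1) and ρ_S > 0 such that (h(x) − h*)^{ϑ_S} ≤ ρ_S‖∇h(x)‖ for all x ∈ S. -/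
open Set Metric
open scoped InnerProductSpace

theorem stmt9 {n : ℕ} (h : EuclideanSpace ℝ (Fin n) → ℝ)
    (g : EuclideanSpace ℝ (Fin n) → EuclideanSpace ℝ (Fin n))
    (hsmooth : ContDiff ℝ 1 h)
    (hgrad : ∀ x, HasGradientAt h (g x) x)
    (hconv : ConvexOn ℝ Set.univ h)
    (hstar : ℝ)
    (hlow : ∀ x, hstar ≤ h x)
    (hattain : ∃ x, h x = hstar)
    (hKL : ∀ xb : EuclideanSpace ℝ (Fin n),
      ∃ ρ > (0 : ℝ), ∃ δ > (0 : ℝ), ∃ ϑ ∈ Set.Ioo (0 : ℝ) 1,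
        ∀ x ∈ ball xb δ, (h x - hstar) ^ ϑ ≤ ρ * ‖g x‖)
    (S : Set (EuclideanSpace ℝ (Fin n))) (hScpt : IsCompact S) :
    ∃ ϑ ∈ Set.Ioo (0 : ℝ) 1, ∃ ρ > (0 : ℝ),
      ∀ x ∈ S, (h x - hstar) ^ ϑ ≤ ρ * ‖g x‖ := by
  rcases S.eq_empty_or_nonempty with hS | hS
  · exact ⟨1/2, ⟨by norm_num, by norm_num⟩, 1, one_pos,
      fun x hx => absurd hx (by simp [hS])⟩
  choose ρf hρf δf hδf ϑf hϑf hKLf using hKL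
  obtain ⟨t, hts⟩ := hScpt.elim_finite_subcover (fun x => ball x (δf x))
    (fun x => isOpen_ball) (fun x _ => mem_iUnion.2 ⟨x, mem_ball_self (hδf x)⟩)
  -- t is nonempty
  obtain ⟨x₀, hx₀⟩ := hS
  obtain ⟨i₀, hi₀t, _⟩ := Set.mem_iUnion₂.1 (hts hx₀)
  have ht : t.Nonempty := ⟨i₀, hi₀t⟩
  set ϑS := t.sup' ht ϑf with hϑSdef
  obtain ⟨j, hjt, hj⟩ := Finset.exists_mem_eq_sup' ht ϑf
  have hϑS0 : 0 < ϑS := by rw [hϑSdef, hj]; exact (hϑf j).1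
  have hϑS1 : ϑS < 1 := by rw [hϑSdef, hj]; exact (hϑf j).2
  set RS := t.sup' ht ρf with hRSdef
  have hRS0 : 0 < RS := lt_of_lt_of_le (hρf i₀) (Finset.le_sup' ρf hi₀t)
  -- bound on h over S
  obtain ⟨z, hzS, hz⟩ := hScpt.exists_isMaxOn ⟨x₀, hx₀⟩ hsmooth.continuous.continuousOn
  set C : ℝ := max 1 (h z - hstar) with hCdef
  have hC1 : (1 : ℝ) ≤ C := le_max_left _ _
  have hC0 : 0 < C := lt_of_lt_of_le one_pos hC1
  refine ⟨ϑS, ⟨hϑS0, hϑS1⟩, C * RS, mul_pos hC0 hRS0, fun x hxS => ?_⟩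
  obtain ⟨i, hit, hxball⟩ := Set.mem_iUnion₂.1 (hts hxS)
  have key := hKLf i x hxball
  set a := h x - hstar with hadef
  have ha0 : 0 ≤ a := sub_nonneg.2 (hlow x)
  have hgx0 : 0 ≤ ‖g x‖ := norm_nonneg _
  rcases ha0.eq_or_lt with ha | ha
  · rw [← ha, Real.zero_rpow (ne_of_gt hϑS0)]
    positivity
  · have hϑi := hϑf i
    have hle : ϑf i ≤ ϑS := Finset.le_sup' ϑf hit
    have haC : a ≤ C := le_trans (by have hzx : h x ≤ h z := hz hxS; simp only [hadef]; linarith) (le_max_right 1 _)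
    have hsplit : a ^ ϑS = a ^ ϑf i * a ^ (ϑS - ϑf i) := by
      rw [← Real.rpow_add ha]; ring_nf
    have h1 : a ^ (ϑS - ϑf i) ≤ C ^ (ϑS - ϑf i) :=
      Real.rpow_le_rpow ha0 haC (sub_nonneg.2 hle)
    have h2 : C ^ (ϑS - ϑf i) ≤ C := by
      calc C ^ (ϑS - ϑf i) ≤ C ^ (1 : ℝ) :=
            Real.rpow_le_rpow_of_exponent_le hC1 (by linarith [hϑi.1])
        _ = C := Real.rpow_one C
    have hρle : ρf i ≤ RS := Finset.le_sup' ρf hit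
    have hapow0 : 0 ≤ a ^ (ϑS - ϑf i) := Real.rpow_nonneg ha0 _
    calc a ^ ϑS = a ^ ϑf i * a ^ (ϑS - ϑf i) := hsplit
      _ ≤ (ρf i * ‖g x‖) * C := by
          exact mul_le_mul key (le_trans h1 h2) hapow0 (mul_nonneg (hρf i).le hgx0)
      _ ≤ (RS * ‖g x‖) * C := by
          have := mul_le_mul_of_nonneg_right (mul_le_mul_of_nonneg_right hρle hgx0) hC0.le
          linarith
      _ = C * RS * ‖g x‖ := by ring
end

section
/- Let f : ℝⁿ → ℝ be convex and differentiable, and suppose f is (ν, L)-Hölder smooth on a convex set Ω containing x^k and x^{k+1}, where x^{k+1} = x^k − α‖∇f(x^k)‖^{(1−ν)/ν}∇f(x^k) with 0 < α ≤ ((1+ν)/L)^{1/ν}. Then f(x^{k+1}) ≤ f(x^k) − (α − (L/(1+ν))α^{1+ν})‖∇f(x^k)‖^{(1+ν)/ν}, and in particular f(x^{k+1}) ≤ f(x^k). -/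
open Set Metric
open scoped InnerProductSpace

section aux

variable {n : ℕ}

local notation "E" => EuclideanSpace ℝ (Fin n)

lemma descent_lemma (Ω : Set E) (hΩconv : Convex ℝ Ω)
    (L ν : ℝ) (hL : 0 < L) (hν : ν ∈ Set.Ioc (0 : ℝ) 1)
    (f : E → ℝ) (g : E → E)
    (hgrad : ∀ x, HasGradientAt f (g x) x)
    (hhold : ∀ x ∈ Ω, ∀ y ∈ Ω, ‖g x - g y‖ ≤ L * ‖x - y‖ ^ ν)
    (x y : E) (hx : x ∈ Ω) (hy : y ∈ Ω) :
    f y ≤ f x + ⟪g x, y - x⟫_ℝ + L / (1 + ν) * ‖y - x‖ ^ (1 + ν) := by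
  have hν0 : 0 < ν := hν.1
  have h1ν : (0:ℝ) < 1 + ν := by linarith
  set d : E := y - x with hd
  set c : ℝ → E := fun t => x + t • d with hc
  have hc0 : c 0 = x := by simp [hc]
  have hc1 : c 1 = y := by simp [hc, hd]
  have hcmem : ∀ t ∈ Icc (0:ℝ) 1, c t ∈ Ω := by
    intro t ht
    have : c t = (1 - t) • x + t • y := by
      simp only [hc, hd, smul_sub]
      module
    rw [this]
    exact hΩconv hx hy (by linarith [ht.1, ht.2]) ht.1 (by ring)
  -- continuity of g on Ω
  have hgcont : ContinuousOn g Ω := by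
    intro z hz
    rw [ContinuousWithinAt, tendsto_iff_dist_tendsto_zero]
    have h1 : Filter.Tendsto (fun w : E => ‖w - z‖) (nhdsWithin z Ω) (nhds 0) :=
      (tendsto_norm_sub_self z).mono_left nhdsWithin_le_nhds
    have h2 : Filter.Tendsto (fun s : ℝ => L * s ^ ν) (nhds 0) (nhds 0) := by
      have := (Real.continuousAt_rpow_const 0 ν (Or.inr hν0.le)).tendsto
      rw [Real.zero_rpow hν0.ne'] at this
      simpa using (this.const_mul L)
    have hb : Filter.Tendsto (fun w : E => L * ‖w - z‖ ^ ν) (nhdsWithin z Ω) (nhds 0) :=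
      h2.comp h1
    apply squeeze_zero' (Filter.Eventually.of_forall fun _ => dist_nonneg) _ hb
    filter_upwards [self_mem_nhdsWithin] with w hw
    have := hhold w hw z hz
    rwa [dist_eq_norm]
  have hccont : Continuous c := by continuity
  have hgc : ContinuousOn (fun t => (⟪g (c t), d⟫_ℝ : ℝ)) (Icc 0 1) := by
    apply ContinuousOn.inner _ continuousOn_const
    exact (hgcont.comp hccont.continuousOn hcmem)
  -- derivative along the segment
  have hderiv : ∀ t : ℝ, HasDerivAt (fun s => f (c s)) ⟪g (c t), d⟫_ℝ t := by
    intro t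
    have hline : HasDerivAt c d t := by
      have h := ((hasDerivAt_id' t).smul_const d).const_add x
      rw [one_smul] at h
      exact h
    have hf := (hgrad (c t)).hasFDerivAt
    have := hf.comp_hasDerivAt t hline
    simp [InnerProductSpace.toDual_apply_apply] at this
    exact this
  have hint : IntervalIntegrable (fun t => (⟪g (c t), d⟫_ℝ : ℝ)) MeasureTheory.volume 0 1 :=
    (hgc.mono (by rw [uIcc_of_le (by norm_num : (0:ℝ) ≤ 1)])).intervalIntegrable
  have hftc : f y - f x = ∫ t in (0:ℝ)..1, ⟪g (c t), d⟫_ℝ := by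
    rw [← hc1, ← hc0]
    exact (intervalIntegral.integral_eq_sub_of_hasDerivAt
      (fun t _ => hderiv t) hint).symm
  -- bound the integrand
  have hbd : ∀ t ∈ Icc (0:ℝ) 1,
      (⟪g (c t), d⟫_ℝ : ℝ) ≤ ⟪g x, d⟫_ℝ + L * ‖d‖ ^ (1 + ν) * t ^ ν := by
    intro t ht
    have h1 : (⟪g (c t), d⟫_ℝ : ℝ) - ⟪g x, d⟫_ℝ = ⟪g (c t) - g x, d⟫_ℝ := by
      rw [inner_sub_left]
    have h2 : (⟪g (c t) - g x, d⟫_ℝ : ℝ) ≤ ‖g (c t) - g x‖ * ‖d‖ :=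
      real_inner_le_norm _ _
    have h3 : ‖g (c t) - g x‖ ≤ L * ‖c t - x‖ ^ ν := hhold _ (hcmem t ht) x hx
    have h4 : ‖c t - x‖ = t * ‖d‖ := by
      simp [hc, norm_smul, abs_of_nonneg ht.1]
    have h5 : L * ‖c t - x‖ ^ ν * ‖d‖ = L * ‖d‖ ^ (1 + ν) * t ^ ν := by
      rw [h4, Real.mul_rpow ht.1 (norm_nonneg d),
        Real.rpow_add' (norm_nonneg d) h1ν.ne']
      rw [Real.rpow_one]
      ring
    nlinarith [norm_nonneg d, mul_le_mul_of_nonneg_right h3 (norm_nonneg d),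
      h1, h2, h5]
  -- integrate the bound
  have hintR : IntervalIntegrable (fun t : ℝ => ⟪g x, d⟫_ℝ + L * ‖d‖ ^ (1 + ν) * t ^ ν)
      MeasureTheory.volume 0 1 := by
    apply IntervalIntegrable.add intervalIntegrable_const
    exact (intervalIntegral.intervalIntegrable_rpow (by left; linarith)).const_mul _
  have hmono : (∫ t in (0:ℝ)..1, ⟪g (c t), d⟫_ℝ) ≤
      ∫ t in (0:ℝ)..1, (⟪g x, d⟫_ℝ + L * ‖d‖ ^ (1 + ν) * t ^ ν) := by
    apply intervalIntegral.integral_mono_on (by norm_num) hint hintR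
    exact hbd
  have hval : (∫ t in (0:ℝ)..1, (⟪g x, d⟫_ℝ + L * ‖d‖ ^ (1 + ν) * t ^ ν)) =
      ⟪g x, d⟫_ℝ + L / (1 + ν) * ‖d‖ ^ (1 + ν) := by
    rw [intervalIntegral.integral_add intervalIntegrable_const
      ((intervalIntegral.intervalIntegrable_rpow (by left; linarith)).const_mul _),
      intervalIntegral.integral_const_mul, integral_rpow (by left; linarith)]
    rw [Real.one_rpow, Real.zero_rpow (by linarith : ν + 1 ≠ 0),
      intervalIntegral.integral_const]
    simp only [smul_eq_mul, sub_zero, mul_one]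
    field_simp
    ring
  have := hftc.le.trans (hmono.trans hval.le)
  linarith

end aux

theorem stmt10 {n : ℕ} (Ω : Set (EuclideanSpace ℝ (Fin n))) (hΩconv : Convex ℝ Ω)
    (L ν : ℝ) (hL : 0 < L) (hν : ν ∈ Set.Ioc (0 : ℝ) 1)
    (f : EuclideanSpace ℝ (Fin n) → ℝ)
    (g : EuclideanSpace ℝ (Fin n) → EuclideanSpace ℝ (Fin n))
    (hgrad : ∀ x, HasGradientAt f (g x) x)
    (hconv : ConvexOn ℝ Set.univ f)
    (hhold : ∀ x ∈ Ω, ∀ y ∈ Ω, ‖g x - g y‖ ≤ L * ‖x - y‖ ^ ν)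
    (xk xk1 : EuclideanSpace ℝ (Fin n)) (hxk : xk ∈ Ω) (hxk1 : xk1 ∈ Ω)
    (α : ℝ) (hα0 : 0 < α) (hα1 : α ≤ ((1 + ν) / L) ^ (1 / ν))
    (hupd : xk1 = xk - (α * ‖g xk‖ ^ ((1 - ν) / ν)) • g xk) :
    f xk1 ≤ f xk - (α - L / (1 + ν) * α ^ (1 + ν)) * ‖g xk‖ ^ ((1 + ν) / ν) ∧
      f xk1 ≤ f xk := by
  have hν0 := hν.1
  -- the coefficient is nonnegative
  have hcoef : 0 ≤ α - L / (1 + ν) * α ^ (1 + ν) := by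
    have hαν : α ^ ν ≤ (1 + ν) / L := by
      have h1 : α ^ ν ≤ (((1 + ν) / L) ^ (1 / ν)) ^ ν :=
        Real.rpow_le_rpow hα0.le hα1 hν0.le
      rwa [← Real.rpow_mul (by positivity), one_div_mul_cancel hν0.ne',
        Real.rpow_one] at h1
    have h2 : α ^ (1 + ν) = α * α ^ ν := by
      rw [Real.rpow_add hα0, Real.rpow_one]
    have h3 : L / (1 + ν) * α ^ (1 + ν) ≤ α := by
      rw [h2]
      have : L / (1 + ν) * (α * ((1 + ν) / L)) = α := by
        field_simp
      calc L / (1 + ν) * (α * α ^ ν) ≤ L / (1 + ν) * (α * ((1 + ν) / L)) := by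
            apply mul_le_mul_of_nonneg_left _ (by positivity)
            exact mul_le_mul_of_nonneg_left hαν hα0.le
        _ = α := this
    linarith
  rcases eq_or_ne (g xk) 0 with hg0 | hg0
  · have hxx : xk1 = xk := by simp [hupd, hg0]
    have : ‖g xk‖ ^ ((1 + ν) / ν) = 0 := by
      rw [hg0]
      simp [Real.zero_rpow (by positivity : (1 + ν) / ν ≠ 0)]
    constructor
    · rw [hxx, this]; linarith
    · rw [hxx]
  · have hgn : 0 < ‖g xk‖ := norm_pos_iff.mpr hg0
    set G := ‖g xk‖ with hG
    have key := descent_lemma Ω hΩconv L ν hL hν f g hgrad hhold xk xk1 hxk hxk1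
    have hdiff : xk1 - xk = -((α * G ^ ((1 - ν) / ν)) • g xk) := by
      rw [hupd]; abel
    have hcpos : 0 < α * G ^ ((1 - ν) / ν) := by positivity
    have hinner : ⟪g xk, xk1 - xk⟫_ℝ = -(α * G ^ ((1 - ν) / ν)) * G ^ 2 := by
      rw [hdiff, inner_neg_right, real_inner_smul_right, real_inner_self_eq_norm_sq]
      ring
    have hnorm : ‖xk1 - xk‖ = α * G ^ ((1 - ν) / ν) * G := by
      rw [hdiff, norm_neg, norm_smul, Real.norm_eq_abs, abs_of_pos hcpos]
    -- rpow arithmetic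
    have e1 : G ^ ((1 - ν) / ν) * G ^ 2 = G ^ ((1 + ν) / ν) := by
      rw [← Real.rpow_two, ← Real.rpow_add hgn]
      congr 1
      field_simp
      ring
    have hν0' : 0 < ν := hν.1
    have ha : G ^ ((1 - ν) / ν) * G = G ^ (1 / ν) := by
      have h := Real.rpow_add hgn ((1 - ν) / ν) 1
      rw [Real.rpow_one] at h
      rw [← h]
      congr 1
      field_simp
      ring
    have e2 : (α * G ^ ((1 - ν) / ν) * G) ^ (1 + ν) = α ^ (1 + ν) * G ^ ((1 + ν) / ν) := by
      rw [mul_assoc, ha, Real.mul_rpow hα0.le (by positivity), ← Real.rpow_mul hgn.le]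
      congr 2
      field_simp
    rw [hinner, hnorm, e2] at key
    have key2 : f xk1 ≤ f xk - (α - L / (1 + ν) * α ^ (1 + ν)) * G ^ ((1 + ν) / ν) := by
      have : α * G ^ ((1 - ν) / ν) * G ^ 2 = α * G ^ ((1 + ν) / ν) := by
        rw [mul_assoc, e1]
      nlinarith [key, this]
    refine ⟨key2, ?_⟩
    have : 0 ≤ (α - L / (1 + ν) * α ^ (1 + ν)) * G ^ ((1 + ν) / ν) := by
      apply mul_nonneg hcoef (by positivity)
    linarith
end

section
/- Let f : ℝⁿ → ℝ be differentiable, μ-strongly convex and with L-Lipschitz gradient on a convex set Ω containing the iterates and the unique minimizer x*, with μ < L. If x^{k+1} = x^k − α_k∇f(x^k) with ᾱ ≤ α_k ≤ 1/L for some 0 < ᾱ < 1/L, then ‖x^{k+1} − x*‖² ≤ (1 − 2ᾱμL/(μ + L))‖x^k − x*‖². -/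
open Set Metric
open scoped InnerProductSpace

lemma descent_aux {n : ℕ} (Ω : Set (EuclideanSpace ℝ (Fin n))) (hΩconv : Convex ℝ Ω)
    (L : ℝ) (hL : 0 ≤ L)
    (f : EuclideanSpace ℝ (Fin n) → ℝ)
    (g : EuclideanSpace ℝ (Fin n) → EuclideanSpace ℝ (Fin n))
    (hgrad : ∀ x ∈ Ω, HasGradientAt f (g x) x)
    (hlip : ∀ x ∈ Ω, ∀ y ∈ Ω, ‖g x - g y‖ ≤ L * ‖x - y‖)
    {x y : EuclideanSpace ℝ (Fin n)} (hx : x ∈ Ω) (hy : y ∈ Ω) :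
    f y ≤ f x + ⟪g x, y - x⟫_ℝ + L / 2 * ‖y - x‖ ^ 2 := by
  set v := y - x with hv
  have hseg : ∀ t ∈ Icc (0:ℝ) 1, x + t • v ∈ Ω := by
    intro t ht
    have h := hΩconv hx hy (by linarith [ht.2] : (0:ℝ) ≤ 1 - t) ht.1 (by ring)
    have : (1 - t) • x + t • y = x + t • v := by
      rw [hv]; module
    rwa [this] at h
  set ψ : ℝ → ℝ := fun t => f (x + t • v) - t * ⟪g x, v⟫_ℝ - L / 2 * t ^ 2 * ‖v‖ ^ 2 with hψ
  have hder : ∀ t ∈ Icc (0:ℝ) 1, HasDerivAt ψ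
      (⟪g (x + t • v), v⟫_ℝ - ⟪g x, v⟫_ℝ - L * t * ‖v‖ ^ 2) t := by
    intro t ht
    have hc : HasDerivAt (fun t : ℝ => x + t • v) v t := by
      simpa using ((hasDerivAt_id t).smul_const v).const_add x
    have hf := (hgrad _ (hseg t ht)).hasFDerivAt.comp_hasDerivAt t hc
    have hf' : HasDerivAt (fun t : ℝ => f (x + t • v)) ⟪g (x + t • v), v⟫_ℝ t := by
      simpa [InnerProductSpace.toDual_apply_apply, Function.comp_def] using hf
    have h2 : HasDerivAt (fun t : ℝ => t * ⟪g x, v⟫_ℝ) ⟪g x, v⟫_ℝ t := by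
      simpa using (hasDerivAt_id t).mul_const ⟪g x, v⟫_ℝ
    have h3 : HasDerivAt (fun t : ℝ => L / 2 * t ^ 2 * ‖v‖ ^ 2) (L * t * ‖v‖ ^ 2) t := by
      have := ((hasDerivAt_pow 2 t).const_mul (L / 2)).mul_const (‖v‖ ^ 2)
      refine this.congr_deriv ?_
      rw [show (2:ℕ) - 1 = 1 from rfl, pow_one]
      push_cast
      ring
    exact (hf'.sub h2).sub h3
  have hnonpos : ∀ t ∈ Icc (0:ℝ) 1,
      ⟪g (x + t • v), v⟫_ℝ - ⟪g x, v⟫_ℝ - L * t * ‖v‖ ^ 2 ≤ 0 := by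
    intro t ht
    have h1 : ⟪g (x + t • v), v⟫_ℝ - ⟪g x, v⟫_ℝ = ⟪g (x + t • v) - g x, v⟫_ℝ := by
      rw [inner_sub_left]
    have h2 : ⟪g (x + t • v) - g x, v⟫_ℝ ≤ ‖g (x + t • v) - g x‖ * ‖v‖ :=
      real_inner_le_norm _ _
    have h3 : ‖g (x + t • v) - g x‖ ≤ L * ‖(x + t • v) - x‖ := hlip _ (hseg t ht) _ hx
    have h4 : ‖(x + t • v) - x‖ = t * ‖v‖ := by
      have : (x + t • v) - x = t • v := by abel
      rw [this, norm_smul, Real.norm_eq_abs, abs_of_nonneg ht.1]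
    have h5 : ⟪g (x + t • v) - g x, v⟫_ℝ ≤ L * t * ‖v‖ ^ 2 := by
      calc ⟪g (x + t • v) - g x, v⟫_ℝ ≤ ‖g (x + t • v) - g x‖ * ‖v‖ := h2
        _ ≤ (L * (t * ‖v‖)) * ‖v‖ := by
            apply mul_le_mul_of_nonneg_right _ (norm_nonneg v)
            rw [← h4]; exact h3
        _ = L * t * ‖v‖ ^ 2 := by ring
    linarith [h1 ▸ h5]
  have hanti : AntitoneOn ψ (Icc (0:ℝ) 1) := by
    apply antitoneOn_of_deriv_nonpos (convex_Icc 0 1)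
    · exact continuousOn_of_forall_continuousAt fun t ht => (hder t ht).continuousAt
    · intro t ht
      rw [interior_Icc] at ht
      exact (hder t (Ioo_subset_Icc_self ht)).differentiableAt.differentiableWithinAt
    · intro t ht
      rw [interior_Icc] at ht
      rw [(hder t (Ioo_subset_Icc_self ht)).deriv]
      exact hnonpos t (Ioo_subset_Icc_self ht)
  have key := hanti (left_mem_Icc.mpr zero_le_one) (right_mem_Icc.mpr zero_le_one) zero_le_one
  have hxy : x + (1:ℝ) • v = y := by rw [hv]; module
  have e0 : ψ 0 = f x := by
    simp only [hψ, zero_smul, add_zero, zero_mul]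
    norm_num
  have e1 : ψ 1 = f y - ⟪g x, v⟫_ℝ - L / 2 * ‖v‖ ^ 2 := by
    simp only [hψ, hxy, one_mul, one_pow, mul_one]
  rw [e0, e1] at key
  linarith

set_option maxHeartbeats 1000000 in
theorem stmt13 {n : ℕ} (Ω : Set (EuclideanSpace ℝ (Fin n))) (hΩconv : Convex ℝ Ω)
    (L μ : ℝ) (hμ : 0 < μ) (hμL : μ < L)
    (f : EuclideanSpace ℝ (Fin n) → ℝ)
    (g : EuclideanSpace ℝ (Fin n) → EuclideanSpace ℝ (Fin n))
    (hgrad : ∀ x ∈ Ω, HasGradientAt f (g x) x)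
    (hlip : ∀ x ∈ Ω, ∀ y ∈ Ω, ‖g x - g y‖ ≤ L * ‖x - y‖)
    (hstr : ∀ x ∈ Ω, ∀ y ∈ Ω, f y ≥ f x + ⟪g x, y - x⟫_ℝ + μ / 2 * ‖y - x‖ ^ 2)
    (xstar : EuclideanSpace ℝ (Fin n)) (hxstar : xstar ∈ Ω)
    (hmin : ∀ y, f xstar ≤ f y) (hgstar : g xstar = 0)
    (xk xk1 : EuclideanSpace ℝ (Fin n)) (hxk : xk ∈ Ω) (hxk1 : xk1 ∈ Ω)
    (α ᾱ : ℝ) (hᾱ0 : 0 < ᾱ) (hᾱ1 : ᾱ < 1 / L) (hα : ᾱ ≤ α ∧ α ≤ 1 / L)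
    (hupd : xk1 = xk - α • g xk) :
    ‖xk1 - xstar‖ ^ 2 ≤ (1 - 2 * ᾱ * μ * L / (μ + L)) * ‖xk - xstar‖ ^ 2 := by
  obtain ⟨hαl, hαu⟩ := hα
  have hL : 0 < L := hμ.trans hμL
  have hα0 : 0 < α := lt_of_lt_of_le hᾱ0 hαl
  have hLα : L * α ≤ 1 := by
    have := (le_div_iff₀ hL).mp hαu
    linarith
  have hμL2 : 0 < μ + L := by linarith
  -- fact A
  have hA : f xstar ≥ f xk - ⟪g xk, xk - xstar⟫_ℝ + μ / 2 * ‖xk - xstar‖ ^ 2 := by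
    have h := hstr xk hxk xstar hxstar
    have e1 : ⟪g xk, xstar - xk⟫_ℝ = -⟪g xk, xk - xstar⟫_ℝ := by
      rw [show xstar - xk = -(xk - xstar) by abel, inner_neg_right]
    have e2 : ‖xstar - xk‖ = ‖xk - xstar‖ := norm_sub_rev _ _
    rw [e1, e2] at h
    linarith
  -- fact B
  have hB : f xk1 ≥ f xstar + μ / 2 * ‖xk1 - xstar‖ ^ 2 := by
    have h := hstr xstar hxstar xk1 hxk1
    rw [hgstar, inner_zero_left] at h
    linarith
  -- fact D
  have hD : f xk ≥ f xstar + μ / 2 * ‖xk - xstar‖ ^ 2 := by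
    have h := hstr xstar hxstar xk hxk
    rw [hgstar, inner_zero_left] at h
    linarith
  -- fact C : descent lemma
  have hC : f xk1 ≤ f xk - α * ‖g xk‖ ^ 2 + L / 2 * (α ^ 2 * ‖g xk‖ ^ 2) := by
    have h := descent_aux Ω hΩconv L hL.le f g hgrad hlip hxk hxk1
    have e3 : xk1 - xk = -(α • g xk) := by rw [hupd]; abel
    have e4 : ⟪g xk, xk1 - xk⟫_ℝ = -(α * ‖g xk‖ ^ 2) := by
      rw [e3, inner_neg_right, real_inner_smul_right, real_inner_self_eq_norm_sq]
    have e5 : ‖xk1 - xk‖ ^ 2 = α ^ 2 * ‖g xk‖ ^ 2 := by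
      rw [e3, norm_neg, norm_smul, mul_pow, Real.norm_eq_abs, sq_abs]
    rw [e4, e5] at h
    linarith
  -- expansion of R
  have hRe : ‖xk1 - xstar‖ ^ 2 = ‖xk - xstar‖ ^ 2
      - 2 * (α * ⟪g xk, xk - xstar⟫_ℝ) + α ^ 2 * ‖g xk‖ ^ 2 := by
    have e6 : xk1 - xstar = (xk - xstar) - α • g xk := by rw [hupd]; abel
    rw [e6, norm_sub_sq_real, real_inner_smul_right, real_inner_comm,
      norm_smul, mul_pow, Real.norm_eq_abs, sq_abs]
  set G := ‖g xk‖ ^ 2 with hG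
  set D2 := ‖xk - xstar‖ ^ 2 with hD2
  set P := ⟪g xk, xk - xstar⟫_ℝ with hP
  set R := ‖xk1 - xstar‖ ^ 2 with hR0
  set s := 2 * ᾱ * μ * L / (μ + L) with hs0
  have hGpos : 0 ≤ G := by rw [hG]; positivity
  have hDpos : 0 ≤ D2 := by rw [hD2]; positivity
  have hs : s * (μ + L) = 2 * ᾱ * μ * L := by
    rw [hs0]; exact div_mul_cancel₀ _ (ne_of_gt hμL2)
  clear_value G D2 P R s
  clear hgrad hlip hstr hupd hmin hgstar hΩconv hxstar hxk hxk1 hᾱ1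
  set A := f xk - f xstar with hAd
  have hA' : A + μ / 2 * D2 ≤ P := by rw [hAd]; linarith
  have hBC : μ / 2 * R ≤ A - α * G + L / 2 * (α ^ 2 * G) := by rw [hAd]; linarith
  have hD' : μ / 2 * D2 ≤ A := by rw [hAd]; linarith
  clear_value A
  clear hA hB hC hD
  -- combined inequality
  have hden : 0 < μ * α + 2 - L * α := by nlinarith [mul_pos hμ hα0]
  have i1 : R ≤ D2 - 2 * α * A - α * μ * D2 + α ^ 2 * G := by
    have h := mul_le_mul_of_nonneg_left hA' (by linarith : (0:ℝ) ≤ 2 * α)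
    linarith [h]
  have i2 : μ * R ≤ 2 * A - 2 * (α * G) + L * (α ^ 2 * G) := by
    linarith
  have key1 : (μ * α + 2 - L * α) * R ≤ (2 - L * α - 3 * μ * α + 2 * μ * L * α ^ 2) * D2 := by
    have p1 := mul_le_mul_of_nonneg_left i1 (by linarith : (0:ℝ) ≤ 2 - L * α)
    have p2 := mul_le_mul_of_nonneg_left i2 hα0.le
    have p3 : 0 ≤ 2 * α * (1 - L * α) * (A - μ / 2 * D2) := by
      apply mul_nonneg
      · nlinarith
      · linarith
    linarith [p1, p2, p3]
  -- final comparison of coefficients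
  have t1 : 0 ≤ 2 * μ * L * (α - ᾱ) * (μ * α + 2 - L * α) := by
    apply mul_nonneg _ hden.le
    apply mul_nonneg
    apply mul_nonneg (by linarith) hL.le
    linarith
  have t2 : 0 ≤ 4 * μ ^ 2 * α * (1 - L * α) := by
    apply mul_nonneg
    apply mul_nonneg (by positivity) hα0.le
    linarith
  have e7 : (1 - s) * (μ * α + 2 - L * α) * (μ + L) =
      (μ * α + 2 - L * α) * (μ + L) - 2 * ᾱ * μ * L * (μ * α + 2 - L * α) := by
    linear_combination (-(μ * α + 2 - L * α)) * hs
  have hNs : (2 - L * α - 3 * μ * α + 2 * μ * L * α ^ 2) * (μ + L) ≤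
      (1 - s) * (μ * α + 2 - L * α) * (μ + L) := by
    rw [e7]
    linarith [t1, t2]
  have hNs' : (2 - L * α - 3 * μ * α + 2 * μ * L * α ^ 2) ≤ (1 - s) * (μ * α + 2 - L * α) :=
    le_of_mul_le_mul_right (by linarith) hμL2
  have hN2 : (2 - L * α - 3 * μ * α + 2 * μ * L * α ^ 2) * D2 ≤
      (1 - s) * (μ * α + 2 - L * α) * D2 :=
    mul_le_mul_of_nonneg_right hNs' hDpos
  have h7 : (μ * α + 2 - L * α) * R ≤ (μ * α + 2 - L * α) * ((1 - s) * D2) := by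
    linarith [key1, hN2]
  exact le_of_mul_le_mul_left h7 hden
end
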